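/- If N is a composite number such that φ(N) divides N-1, then N is a squarefree Carmichael number. -/

import Mathlib

def IsCarmichael (N : ℕ) : Prop :=
  1 < N ∧ ¬ N.Prime ∧ ∀ b : ℕ, Nat.Coprime b N → b ^ (N - 1) ≡ 1 [MOD N]
theorem lehmer_implies_carmichael (N : ℕ) (hN : 1 < N) (hcomp : ¬ N.Prime)
    (h : N.totient ∣ N - 1) : Squarefree N ∧ IsCarmichael N := by
  have hN0 : N ≠ 0 := by omega
  constructor
  · rw [Nat.squarefree_iff_prime_squarefree]
    rintro p hp ⟨m, hm⟩
    have hpk : 2 ≤ N.factorization p := by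
      rw [← hp.pow_dvd_iff_le_factorization hN0]
      exact ⟨m, by rw [hm]; ring⟩
    -- p divides totient
    have hdvd : p ∣ N.totient := by
      have hsplit : N = p ^ N.factorization p * (N / p ^ N.factorization p) :=
        (Nat.ordProj_mul_ordCompl_eq_self N p).symm
      have hcop : Nat.Coprime (p ^ N.factorization p) (N / p ^ N.factorization p) :=
        Nat.coprime_ordCompl hp hN0 |>.pow_left _
      rw [hsplit, Nat.totient_mul hcop, Nat.totient_prime_pow hp (by omega)]
      exact Dvd.dvd.mul_right (Dvd.dvd.mul_right (dvd_pow_self p (by omega)) _) _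
    have hp1 : p ∣ N - 1 := hdvd.trans h
    have hpN : p ∣ N := ⟨p * m, by rw [hm]; ring⟩
    have : p ∣ 1 := by simpa [Nat.sub_sub_self hN.le] using Nat.dvd_sub hpN hp1
    exact hp.one_lt.ne' (Nat.dvd_one.mp this)
  · refine ⟨hN, hcomp, fun b hb => ?_⟩
    obtain ⟨k, hk⟩ := h
    calc b ^ (N - 1) = (b ^ N.totient) ^ k := by rw [← pow_mul, hk]
    _ ≡ 1 ^ k [MOD N] := (Nat.ModEq.pow_totient hb).pow k
    _ = 1 := one_pow k
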